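/- Let n ≥ 1, let Δ ⊆ ℝⁿ be the standard simplex, let Ω : ℝⁿ → ℝ be continuous and convex on Δ, let Ω*(z) := sup_{p ∈ Δ} (⟨z, p⟩ − Ω(p)), and let L_Ω(z; q) := Ω*(z) + Ω(q) − ⟨z, q⟩ for q ∈ Δ. If ε ∈ [0, 1] and q, r ∈ Δ satisfy Ω(q) ≥ Ω(r), then for every z ∈ ℝⁿ, L_Ω(z; q) + ε·(⟨z, q⟩ − ⟨z, r⟩) ≥ 0. In particular, when q = e_{y*} is a one-hot vector and r = u is the uniform distribution, L_Ω(z; e_{y*}) + ε·(z_{y*} − z̄) ≥ 0, where z̄ := (1/n)·Σ_y z_y. -/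

import Mathlib

/-- Nonnegativity of the unregularized Fenchel-Young loss plus the
linear regularizer (Appendix A): if Ω(q) ≥ Ω(r) then
L_Ω(z;q) + ε(⟨z,q⟩ - ⟨z,r⟩) ≥ 0; in particular for q a one-hot vector and r the
uniform distribution, L_Ω(z;e_{y*}) + ε(z_{y*} - z̄) ≥ 0. -/
theorem fy_loss_plus_linear_regularizer_nonneg
    (n : ℕ) (hn : 1 ≤ n)
    (Ω : (Fin n → ℝ) → ℝ)
    (hΩcont : ContinuousOn Ω (stdSimplex ℝ (Fin n)))
    (hΩconv : ConvexOn ℝ (stdSimplex ℝ (Fin n)) Ω)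
    (Ωstar : (Fin n → ℝ) → ℝ)
    (hΩstar : ∀ z, Ωstar z =
      sSup ((fun p => (∑ i, z i * p i) - Ω p) '' stdSimplex ℝ (Fin n)))
    (L : (Fin n → ℝ) → (Fin n → ℝ) → ℝ)
    (hL : ∀ z q, L z q = Ωstar z + Ω q - ∑ i, z i * q i)
    (ε : ℝ) (hε : ε ∈ Set.Icc (0 : ℝ) 1)
    (q : Fin n → ℝ) (hq : q ∈ stdSimplex ℝ (Fin n))
    (r : Fin n → ℝ) (hr : r ∈ stdSimplex ℝ (Fin n))
    (hqr : Ω r ≤ Ω q)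
    (z : Fin n → ℝ) :
    0 ≤ L z q + ε * ((∑ i, z i * q i) - ∑ i, z i * r i) ∧
    (∀ ystar : Fin n, q = Pi.single ystar 1 → r = (fun _ => (n : ℝ)⁻¹) →
      0 ≤ L z q + ε * (z ystar - (n : ℝ)⁻¹ * ∑ y, z y)) := by
  obtain ⟨hε0, hε1⟩ := hε
  -- the perturbed point
  set p : Fin n → ℝ := fun i => (1 - ε) * q i + ε * r i with hp
  have hpmem : p ∈ stdSimplex ℝ (Fin n) := by
    have h := (convex_stdSimplex ℝ (Fin n)) hq hr
      (by linarith : (0:ℝ) ≤ 1 - ε) hε0 (by ring)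
    have : p = (1 - ε) • q + ε • r := by
      funext i; simp [p, smul_eq_mul]
    rwa [this]
  -- bddAbove of the image
  have hfc : ContinuousOn (fun p : Fin n → ℝ => (∑ i, z i * p i) - Ω p)
      (stdSimplex ℝ (Fin n)) := by
    apply ContinuousOn.sub _ hΩcont
    exact (continuous_finset_sum _ fun i _ =>
      (continuous_const.mul (continuous_apply i))).continuousOn
  have hbdd : BddAbove ((fun p => (∑ i, z i * p i) - Ω p) '' stdSimplex ℝ (Fin n)) :=
    ((isCompact_stdSimplex ℝ (Fin n)).image_of_continuousOn hfc).bddAbove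
  have hstar : (∑ i, z i * p i) - Ω p ≤ Ωstar z := by
    rw [hΩstar]
    exact le_csSup hbdd ⟨p, hpmem, rfl⟩
  -- convexity bound
  have hconv : Ω p ≤ (1 - ε) * Ω q + ε * Ω r :=
    hΩconv.2 hq hr (by linarith) hε0 (by ring)
  have hΩp : Ω p ≤ Ω q := by nlinarith
  have hsum : (∑ i, z i * p i) = (1 - ε) * (∑ i, z i * q i) + ε * (∑ i, z i * r i) := by
    rw [Finset.mul_sum, Finset.mul_sum, ← Finset.sum_add_distrib]
    exact Finset.sum_congr rfl fun i _ => by simp [p]; ring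
  have hmain : 0 ≤ L z q + ε * ((∑ i, z i * q i) - ∑ i, z i * r i) := by
    rw [hL]
    rw [hsum] at hstar
    linarith
  refine ⟨hmain, fun ystar hqy hru => ?_⟩
  have h1 : (∑ i, z i * q i) = z ystar := by
    subst hqy
    simp [Pi.single_apply, Finset.sum_ite_eq', mul_comm]
  have h2 : (∑ i, z i * r i) = (n : ℝ)⁻¹ * ∑ y, z y := by
    subst hru
    rw [Finset.mul_sum]
    exact Finset.sum_congr rfl fun i _ => by ring
  rw [h1, h2] at hmain
  exact hmain
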